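/- If S is a binary non-overlapping code, then the q-ary code \Phi_{I,J}(S) obtained by replacing each 0 with any letter from I and each 1 with any letter from J is a q-ary non-overlapping code. -/
import Mathlib


/-- A (possibly variable-length) code, given as a set of words, is non-overlapping if
(1) no nonempty proper prefix of a codeword equals a nonempty proper suffix of a
codeword (including of itself), and (2) no codeword contains a distinct codeword
as a contiguous subword. -/
def NonOverlapping {α : Type*} (S : Set (List α)) : Prop :=
  (∀ u ∈ S, ∀ v ∈ S, ∀ p : List α, p ≠ [] → p ≠ u → p ≠ v → p <+: u → ¬ p <:+ v) ∧
  (∀ u ∈ S, ∀ v ∈ S, u ≠ v → ¬ v <:+: u)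

/-- If `S` is a binary non-overlapping code, then the `q`-ary code
`Φ_{I,J}(S)` obtained by replacing each `0` with any letter from `I` and each `1`
with any letter from `J` is a `q`-ary non-overlapping code. -/
theorem stmt4 (q : ℕ) (hq : 2 ≤ q) (I J : Set (Fin q))
    (hI : I.Nonempty) (hJ : J.Nonempty) (hd : Disjoint I J) (hu : I ∪ J = Set.univ)
    (S : Set (List (Fin 2))) (hlen : ∀ w ∈ S, 2 ≤ w.length)
    (hS : NonOverlapping S) :
    NonOverlapping {w : List (Fin q) |
      ∃ ω ∈ S, List.Forall₂ (fun (a : Fin q) (b : Fin 2) => if b = 0 then a ∈ I else a ∈ J) w ω} := by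
  classical
  set R : Fin q → Fin 2 → Prop :=
    fun a b => if b = 0 then a ∈ I else a ∈ J with hR
  set c : Fin q → Fin 2 := fun a => if a ∈ I then 0 else 1 with hc
  have hRc : ∀ a b, R a b → b = c a := by
    intro a b hab
    by_cases hb : b = 0
    · simp only [hR, hb, if_pos rfl] at hab
      simp [hc, hab, hb]
    · simp only [hR, if_neg hb] at hab
      have haI : a ∉ I := fun h => hd.le_bot ⟨h, hab⟩
      simp [hc, haI]
      omega
  have hmap : ∀ (w : List (Fin q)) (ω : List (Fin 2)),
      List.Forall₂ R w ω → ω = w.map c := by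
    intro w ω h
    induction h with
    | nil => rfl
    | cons hab _ ih => simp [ih, hRc _ _ hab]
  constructor
  · rintro u ⟨ωu, hωu, hu2⟩ v ⟨ωv, hωv, hv2⟩ p hp hpu hpv hpre hsuf
    have hωu' := hmap _ _ hu2
    have hωv' := hmap _ _ hv2
    have hpre' : p.map c <+: ωu := hωu' ▸ hpre.map c
    have hsuf' : p.map c <:+ ωv := hωv' ▸ hsuf.map c
    have hne : p.map c ≠ [] := by simpa using hp
    have hneu : p.map c ≠ ωu := by
      intro h
      apply hpu
      apply hpre.eq_of_length
      have := congrArg List.length h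
      simp [hωu'] at this ⊢
      omega
    have hnev : p.map c ≠ ωv := by
      intro h
      apply hpv
      apply hsuf.eq_of_length
      have := congrArg List.length h
      simp [hωv'] at this ⊢
      omega
    exact hS.1 ωu hωu ωv hωv (p.map c) hne hneu hnev hpre' hsuf'
  · rintro u ⟨ωu, hωu, hu2⟩ v ⟨ωv, hωv, hv2⟩ huv hinf
    have hωu' := hmap _ _ hu2
    have hωv' := hmap _ _ hv2
    have hinf' : ωv <:+: ωu := by
      rw [hωu', hωv']; exact hinf.map c
    by_cases h : ωu = ωv
    · apply huv
      apply (hinf.eq_of_length ?_).symm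
      have := congrArg List.length h
      simp [hωu', hωv'] at this
      omega
    · exact hS.2 ωu hωu ωv hωv h hinf'
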